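/- Let G be a countable discrete group. The following are equivalent: (1) G is amenable; (2) for every finite family of bounded functions f_1,…,f_n: G → ℂ, there exists a state τ on ℓ∞(G) such that each of the functions x ↦ τ_y( f_i(xy) · conj(f_i(y)) ) (where τ is applied to the bounded function of the variable y) is positive definite on G. -/

import Mathlib

open scoped ComplexOrder

/-- `f : G → ℂ` is bounded, i.e. `f ∈ ℓ∞(G)`. -/
def IsBddFun {G : Type*} (f : G → ℂ) : Prop := ∃ C : ℝ, ∀ x, ‖f x‖ ≤ C

/-- A state on `ℓ∞(G)`: a positive unital linear functional, encoded as a functional on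
all functions `G → ℂ` whose linearity, positivity and unitality are imposed on bounded
functions. -/
structure LinftyState (G : Type*) where
  toFun : (G → ℂ) → ℂ
  map_add : ∀ f g : G → ℂ, IsBddFun f → IsBddFun g → toFun (f + g) = toFun f + toFun g
  map_smul : ∀ (c : ℂ) (f : G → ℂ), IsBddFun f → toFun (c • f) = c * toFun f
  pos : ∀ f : G → ℂ, IsBddFun f → (∀ x, 0 ≤ f x) → 0 ≤ toFun f
  unital : toFun (fun _ => (1 : ℂ)) = 1

/-- A function `ψ : G → ℂ` is positive definite. -/
def PosDefFun {G : Type*} [Group G] (ψ : G → ℂ) : Prop :=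
  ∀ (n : ℕ) (x : Fin n → G) (c : Fin n → ℂ),
    0 ≤ ∑ i, ∑ j, (starRingEnd ℂ) (c i) * c j * ψ ((x i)⁻¹ * x j)

/-- A finitely supported probability measure on `G`. -/
structure FinProb (G : Type*) where
  w : G →₀ ℝ
  nonneg : ∀ y, 0 ≤ w y
  sum_one : w.sum (fun _ r => r) = 1

/-- `G` is amenable: there is a left-invariant mean (state) on `ℓ∞(G)`. -/
def Amenable (G : Type*) [Group G] : Prop :=
  ∃ τ : LinftyState G, ∀ (s : G) (f : G → ℂ), IsBddFun f →
    τ.toFun (fun x => f (s * x)) = τ.toFun f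

namespace Stmt7Aux

variable {G : Type*}

lemma bdd_const (c : ℂ) : IsBddFun (fun _ : G => c) := ⟨‖c‖, fun _ => le_rfl⟩

lemma bdd_add {f g : G → ℂ} (hf : IsBddFun f) (hg : IsBddFun g) :
    IsBddFun (f + g) := by
  obtain ⟨C, hC⟩ := hf; obtain ⟨D, hD⟩ := hg
  exact ⟨C + D, fun x => (norm_add_le _ _).trans (add_le_add (hC x) (hD x))⟩

lemma bdd_smul (c : ℂ) {f : G → ℂ} (hf : IsBddFun f) : IsBddFun (c • f) := by
  obtain ⟨C, hC⟩ := hf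
  exact ⟨‖c‖ * C, fun x => by
    simpa [norm_smul] using mul_le_mul_of_nonneg_left (hC x) (norm_nonneg c)⟩

lemma bdd_mul {f g : G → ℂ} (hf : IsBddFun f) (hg : IsBddFun g) :
    IsBddFun (fun x => f x * g x) := by
  obtain ⟨C, hC⟩ := hf; obtain ⟨D, hD⟩ := hg
  refine ⟨max C 0 * max D 0, fun x => ?_⟩
  rw [norm_mul]
  exact mul_le_mul ((hC x).trans (le_max_left _ _)) ((hD x).trans (le_max_left _ _))
    (norm_nonneg _) (le_max_right _ _)

lemma bdd_comp {f : G → ℂ} (hf : IsBddFun f) (φ : G → G) :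
    IsBddFun (fun x => f (φ x)) := by
  obtain ⟨C, hC⟩ := hf; exact ⟨C, fun x => hC (φ x)⟩

/-- complexification of a real function -/
def ofR (v : G → ℝ) : G → ℂ := fun y => (v y : ℂ)

lemma bdd_ofR {v : G → ℝ} {C : ℝ} (h : ∀ y, |v y| ≤ C) : IsBddFun (ofR v) :=
  ⟨C, fun x => by simpa [ofR] using h x⟩

variable (σ : LinftyState G)

lemma map_const (c : ℂ) : σ.toFun (fun _ => c) = c := by
  have h1 : (fun _ : G => c) = c • (fun _ : G => (1 : ℂ)) := by funext x; simp
  rw [h1, σ.map_smul c _ (bdd_const 1), σ.unital, mul_one]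

lemma state_mono {f g : G → ℂ} (hf : IsBddFun f) (hg : IsBddFun g)
    (h : ∀ x, f x ≤ g x) : σ.toFun f ≤ σ.toFun g := by
  have hb : IsBddFun (g + (-1 : ℂ) • f) := bdd_add hg (bdd_smul (-1) hf)
  have hadd := σ.map_add f (g + (-1 : ℂ) • f) hf hb
  have heq : f + (g + (-1 : ℂ) • f) = g := by funext x; simp
  rw [heq] at hadd
  have hpos : 0 ≤ σ.toFun (g + (-1 : ℂ) • f) := by
    refine σ.pos _ hb fun x => ?_
    have hx := h x
    simp only [Pi.add_apply, Pi.smul_apply, smul_eq_mul, neg_one_mul, ← sub_eq_add_neg]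
    rw [← sub_nonneg] at hx
    exact hx
  calc σ.toFun f ≤ σ.toFun f + σ.toFun (g + (-1 : ℂ) • f) := le_add_of_nonneg_right hpos
  _ = σ.toFun g := hadd.symm

lemma state_real_bound {v : G → ℝ} {C : ℝ} (h : ∀ y, |v y| ≤ C) :
    (σ.toFun (ofR v)).im = 0 ∧ |(σ.toFun (ofR v)).re| ≤ C := by
  have hb : IsBddFun (ofR v) := bdd_ofR h
  have h1 : σ.toFun (fun _ => ((-C : ℝ) : ℂ)) ≤ σ.toFun (ofR v) := by
    refine state_mono σ (bdd_const _) hb fun x => ?_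
    show ((-C : ℝ) : ℂ) ≤ ((v x : ℝ) : ℂ)
    rw [Complex.real_le_real]
    have := h x; rw [abs_le] at this; exact this.1
  have h2 : σ.toFun (ofR v) ≤ σ.toFun (fun _ => ((C : ℝ) : ℂ)) := by
    refine state_mono σ hb (bdd_const _) fun x => ?_
    show ((v x : ℝ) : ℂ) ≤ ((C : ℝ) : ℂ)
    rw [Complex.real_le_real]
    have := h x; rw [abs_le] at this; exact this.2
  rw [map_const] at h1 h2
  rw [Complex.le_def] at h1 h2
  simp only [Complex.ofReal_re, Complex.ofReal_im, Complex.ofReal_neg] at h1 h2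
  refine ⟨h2.2, abs_le.2 ⟨?_, h2.1⟩⟩
  have := h1.1
  simpa using this

lemma ofR_add (v w : G → ℝ) : ofR (v + w) = ofR v + ofR w := by
  funext x; simp [ofR]

lemma state_ofR_add {v w : G → ℝ} {C D : ℝ} (hv : ∀ y, |v y| ≤ C) (hw : ∀ y, |w y| ≤ D) :
    σ.toFun (ofR (v + w)) = σ.toFun (ofR v) + σ.toFun (ofR w) := by
  rw [ofR_add]; exact σ.map_add _ _ (bdd_ofR hv) (bdd_ofR hw)

lemma state_ofR_smul (r : ℝ) {v : G → ℝ} {C : ℝ} (hv : ∀ y, |v y| ≤ C) :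
    σ.toFun (ofR (r • v)) = (r : ℂ) * σ.toFun (ofR v) := by
  have : ofR (r • v) = (r : ℂ) • ofR v := by funext x; simp [ofR]
  rw [this, σ.map_smul _ _ (bdd_ofR hv)]


lemma bdd_conj {f : G → ℂ} (hf : IsBddFun f) : IsBddFun (fun x => (starRingEnd ℂ) (f x)) := by
  obtain ⟨C, hC⟩ := hf; exact ⟨C, fun x => by simpa using hC x⟩

lemma bdd_sum {ι : Type*} (s : Finset ι) (f : ι → G → ℂ) (hf : ∀ i ∈ s, IsBddFun (f i)) :
    IsBddFun (fun y => ∑ i ∈ s, f i y) := by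
  classical
  induction s using Finset.induction_on with
  | empty => simpa using bdd_const (0 : ℂ)
  | insert _ _ hnotmem ih =>
    rename_i a t
    simp only [Finset.sum_insert hnotmem]
    exact bdd_add (hf a (Finset.mem_insert_self a t))
      (ih fun i hi => hf i (Finset.mem_insert_of_mem hi))

lemma state_map_sum {ι : Type*} (σ : LinftyState G) (s : Finset ι) (f : ι → G → ℂ)
    (hf : ∀ i ∈ s, IsBddFun (f i)) :
    σ.toFun (fun y => ∑ i ∈ s, f i y) = ∑ i ∈ s, σ.toFun (f i) := by
  classical
  induction s using Finset.induction_on with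
  | empty => simpa using map_const σ 0
  | insert _ _ hnotmem ih =>
    rename_i a t
    simp only [Finset.sum_insert hnotmem]
    have h1 : σ.toFun (f a + fun y => ∑ i ∈ t, f i y)
        = σ.toFun (f a) + σ.toFun (fun y => ∑ i ∈ t, f i y) :=
      σ.map_add _ _ (hf a (Finset.mem_insert_self a t))
        (bdd_sum t f fun i hi => hf i (Finset.mem_insert_of_mem hi))
    have h2 : (fun y => f a y + ∑ i ∈ t, f i y) = f a + fun y => ∑ i ∈ t, f i y := rfl
    rw [h2, h1, ih fun i hi => hf i (Finset.mem_insert_of_mem hi)]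

section Forward

variable [Group G]

lemma pd_of_invariant (τ : LinftyState G)
    (hinv : ∀ (s : G) (f : G → ℂ), IsBddFun f → τ.toFun (fun x => f (s * x)) = τ.toFun f)
    (f : G → ℂ) (hf : IsBddFun f) :
    PosDefFun (fun x => τ.toFun (fun y => f (x * y) * (starRingEnd ℂ) (f y))) := by
  intro n x c
  set k : Fin n → Fin n → G → ℂ :=
    fun i j => fun y => f ((x i)⁻¹ * y) * (starRingEnd ℂ) (f ((x j)⁻¹ * y)) with hk_def
  have hkbdd : ∀ i j, IsBddFun (k i j) := fun i j =>
    bdd_mul (bdd_comp hf _) (bdd_conj (bdd_comp hf _))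
  have step1 : ∀ i j, τ.toFun (fun y => f ((x i)⁻¹ * x j * y) * (starRingEnd ℂ) (f y))
      = τ.toFun (k i j) := by
    intro i j
    have := hinv (x j) (k i j) (hkbdd i j)
    rw [← this]
    congr 1
    funext y
    simp only [hk_def]
    rw [show (x i)⁻¹ * (x j * y) = (x i)⁻¹ * x j * y by group,
      show (x j)⁻¹ * (x j * y) = y by group]
  set F : G → ℂ := fun y => ∑ i, (starRingEnd ℂ) (c i) * f ((x i)⁻¹ * y) with hF_def
  have hFbdd : IsBddFun F :=
    bdd_sum _ _ fun i _ => bdd_mul (bdd_const _) (bdd_comp hf _)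
  have hstep : τ.toFun (fun y => F y * (starRingEnd ℂ) (F y))
      = ∑ i, ∑ j, τ.toFun (((starRingEnd ℂ) (c i) * c j) • k i j) := by
    have hpt : (fun y => F y * (starRingEnd ℂ) (F y))
        = fun y => ∑ i, (∑ j, (((starRingEnd ℂ) (c i) * c j) • k i j) y) := by
      funext y
      simp only [hF_def, map_sum, map_mul, Finset.sum_mul_sum, Pi.smul_apply, smul_eq_mul,
        hk_def, Complex.conj_conj]
      refine Finset.sum_congr rfl fun i _ => Finset.sum_congr rfl fun j _ => ?_
      ring
    rw [hpt, state_map_sum τ _ _ (fun i _ => bdd_sum _ _ fun j _ => bdd_smul _ (hkbdd i j))]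
    exact Finset.sum_congr rfl fun i _ =>
      state_map_sum τ _ _ fun j _ => bdd_smul _ (hkbdd i j)
  have hgoal : (∑ i, ∑ j, (starRingEnd ℂ) (c i) * c j *
      τ.toFun (fun y => f ((x i)⁻¹ * x j * y) * (starRingEnd ℂ) (f y)))
      = τ.toFun (fun y => F y * (starRingEnd ℂ) (F y)) := by
    rw [hstep]
    refine Finset.sum_congr rfl fun i _ => Finset.sum_congr rfl fun j _ => ?_
    rw [step1 i j, τ.map_smul _ _ (hkbdd i j)]
  rw [hgoal]
  refine τ.pos _ (bdd_mul hFbdd (bdd_conj hFbdd)) fun y => ?_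
  rw [Complex.mul_conj]
  rw [Complex.zero_le_real]
  exact Complex.normSq_nonneg _

end Forward


/-- bounded real functions -/
def BddR (v : G → ℝ) : Prop := ∃ C, ∀ y, |v y| ≤ C

lemma BddR.add {v w : G → ℝ} (hv : BddR v) (hw : BddR w) : BddR (v + w) := by
  obtain ⟨C, hC⟩ := hv; obtain ⟨D, hD⟩ := hw
  exact ⟨C + D, fun y => (abs_add_le _ _).trans (add_le_add (hC y) (hD y))⟩

lemma BddR.smul (r : ℝ) {v : G → ℝ} (hv : BddR v) : BddR (r • v) := by
  obtain ⟨C, hC⟩ := hv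
  refine ⟨|r| * C, fun y => ?_⟩
  simp only [Pi.smul_apply, smul_eq_mul, abs_mul]
  exact mul_le_mul_of_nonneg_left (hC y) (abs_nonneg r)

lemma BddR.mul {v w : G → ℝ} (hv : BddR v) (hw : BddR w) : BddR (fun y => v y * w y) := by
  obtain ⟨C, hC⟩ := hv; obtain ⟨D, hD⟩ := hw
  refine ⟨max C 0 * max D 0, fun y => ?_⟩
  rw [abs_mul]
  exact mul_le_mul ((hC y).trans (le_max_left _ _)) ((hD y).trans (le_max_left _ _))
    (abs_nonneg _) (le_max_right _ _)

lemma BddR.comp {v : G → ℝ} (hv : BddR v) (φ : G → G) : BddR (fun y => v (φ y)) := by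
  obtain ⟨C, hC⟩ := hv; exact ⟨C, fun y => hC (φ y)⟩

lemma bddR_const (r : ℝ) : BddR (fun _ : G => r) := ⟨|r|, fun _ => le_rfl⟩

lemma BddR.isBdd {v : G → ℝ} (hv : BddR v) : IsBddFun (ofR v) := by
  obtain ⟨C, hC⟩ := hv; exact bdd_ofR hC

lemma state_ofR_add' (σ : LinftyState G) {v w : G → ℝ} (hv : BddR v) (hw : BddR w) :
    σ.toFun (ofR (v + w)) = σ.toFun (ofR v) + σ.toFun (ofR w) := by
  rw [ofR_add]; exact σ.map_add _ _ hv.isBdd hw.isBdd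

lemma state_ofR_smul' (σ : LinftyState G) (r : ℝ) {v : G → ℝ} (hv : BddR v) :
    σ.toFun (ofR (r • v)) = (r : ℂ) * σ.toFun (ofR v) := by
  have h : ofR (r • v) = (r : ℂ) • ofR v := by funext x; simp [ofR]
  rw [h, σ.map_smul _ _ hv.isBdd]

lemma state_ofR_one (σ : LinftyState G) : σ.toFun (ofR (fun _ : G => (1 : ℝ))) = 1 := by
  have h : ofR (fun _ : G => (1 : ℝ)) = fun _ : G => (1 : ℂ) := by funext y; simp [ofR]
  rw [h, σ.unital]

section Key

variable [Group G]

/-- the perturbed function 1 + ε v -/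
def pfun (ε : ℝ) (v : G → ℝ) : G → ℂ := fun y => 1 + (ε : ℂ) * (v y : ℂ)

lemma keyA (σ : LinftyState G) (v : G → ℝ) (C : ℝ) (hC : ∀ y, |v y| ≤ C)
    (ε : ℝ) (hε : 0 < ε)
    (hPD : PosDefFun (fun x =>
      σ.toFun (fun y => pfun ε v (x * y) * (starRingEnd ℂ) (pfun ε v y))))
    (s : G) :
    (σ.toFun (ofR fun y => v (s * y))).re + (σ.toFun (ofR fun y => v (s⁻¹ * y))).re
      - 2 * (σ.toFun (ofR v)).re ≤ 4 * ε * C ^ 2 := by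
  have hCa : ∀ y, |v y| ≤ |C| := fun y => (hC y).trans (le_abs_self C)
  have hvB : BddR v := ⟨|C|, hCa⟩
  set ψ : G → ℂ := fun x =>
    σ.toFun (fun y => pfun ε v (x * y) * (starRingEnd ℂ) (pfun ε v y)) with hψ_def
  -- expansion of ψ
  have hexp : ∀ x : G, (ψ x).re =
      1 + ε * (σ.toFun (ofR fun y => v (x * y))).re + ε * (σ.toFun (ofR v)).re
        + ε ^ 2 * (σ.toFun (ofR fun y => v (x * y) * v y)).re := by
    intro x
    have hpt : (fun y => pfun ε v (x * y) * (starRingEnd ℂ) (pfun ε v y))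
        = ofR ((fun _ => (1 : ℝ)) + (ε • fun y => v (x * y)) + (ε • v)
            + ((ε ^ 2) • fun y => v (x * y) * v y)) := by
      funext y
      simp only [ofR, pfun, Pi.add_apply, Pi.smul_apply, smul_eq_mul, map_add, map_mul,
        map_one, Complex.conj_ofReal]
      push_cast
      ring
    have h1 : BddR (fun _ : G => (1 : ℝ)) := bddR_const 1
    have h2 : BddR (ε • fun y => v (x * y)) := (hvB.comp _).smul ε
    have h3 : BddR (ε • v) := hvB.smul ε
    have h4 : BddR ((ε ^ 2) • fun y => v (x * y) * v y) :=
      (((hvB.comp _).mul hvB)).smul (ε ^ 2)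
    show (σ.toFun _).re = _
    rw [hpt, state_ofR_add' σ ((h1.add h2).add h3) h4,
      state_ofR_add' σ (h1.add h2) h3, state_ofR_add' σ h1 h2,
      state_ofR_one σ, state_ofR_smul' σ ε (hvB.comp _), state_ofR_smul' σ ε hvB,
      state_ofR_smul' σ (ε ^ 2) ((hvB.comp _).mul hvB)]
    simp [Complex.add_re, Complex.mul_re, ← Complex.ofReal_pow, Complex.ofReal_re, Complex.ofReal_im]
  -- PD inequality at points 1, s with coefficients 1, -1
  have h2 := hPD 2 ![1, s] ![1, -1]
  simp only [Fin.sum_univ_two, Matrix.cons_val_zero, Matrix.cons_val_one, Matrix.head_cons,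
    map_one, map_neg, inv_one, one_mul, mul_one, neg_one_mul, mul_neg, neg_neg,
    inv_mul_cancel] at h2
  have hre := (Complex.le_def.mp h2).1
  simp only [Complex.zero_re, Complex.add_re, Complex.neg_re] at hre
  -- now hre : 0 ≤ (ψ 1).re - (ψ s).re + (-(ψ s⁻¹).re + (ψ 1).re) (roughly)
  have e1 := hexp 1
  have es := hexp s
  have esi := hexp s⁻¹
  have hone : (fun y => v ((1 : G) * y)) = v := by funext y; rw [one_mul]
  rw [hone] at e1
  -- bounds on the quadratic terms
  have bb : ∀ x : G, |(σ.toFun (ofR fun y => v (x * y) * v y)).re| ≤ |C| * |C| := by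
    intro x
    exact (state_real_bound σ (v := fun y => v (x * y) * v y) (C := |C| * |C|)
      (fun y => by
        rw [abs_mul]
        exact mul_le_mul (hCa _) (hCa _) (abs_nonneg _) (abs_nonneg _))).2
  have b1 := bb 1
  have bs := bb s
  have bsi := bb s⁻¹
  have hC2 : |C| * |C| = C ^ 2 := by rw [← abs_mul, abs_mul_self]; ring
  rw [hC2] at b1 bs bsi
  rw [abs_le] at b1 bs bsi
  nlinarith [hε, sq_nonneg C, e1, es, esi, hre]

end Key


lemma BddR.neg {v : G → ℝ} (hv : BddR v) : BddR (-v) := by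
  obtain ⟨C, hC⟩ := hv; exact ⟨C, fun y => by simpa using hC y⟩

lemma bddR_re {f : G → ℂ} (hf : IsBddFun f) : BddR (fun y => (f y).re) := by
  obtain ⟨C, hC⟩ := hf
  refine ⟨C, fun y => ?_⟩
  have h := hC y
  exact (Complex.abs_re_le_norm _).trans h

lemma bddR_im {f : G → ℂ} (hf : IsBddFun f) : BddR (fun y => (f y).im) := by
  obtain ⟨C, hC⟩ := hf
  refine ⟨C, fun y => ?_⟩
  have h := hC y
  exact (Complex.abs_im_le_norm _).trans h

lemma state_decomp (σ : LinftyState G) {f : G → ℂ} (hf : IsBddFun f) :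
    σ.toFun f = σ.toFun (ofR fun y => (f y).re)
      + Complex.I * σ.toFun (ofR fun y => (f y).im) := by
  have hre := bddR_re hf
  have him := bddR_im hf
  have hpt : f = ofR (fun y => (f y).re) + Complex.I • ofR (fun y => (f y).im) := by
    funext y
    simp only [Pi.add_apply, Pi.smul_apply, ofR, smul_eq_mul]
    rw [mul_comm, Complex.re_add_im]
  conv_lhs => rw [hpt]
  rw [σ.map_add _ _ hre.isBdd (bdd_smul _ him.isBdd), σ.map_smul _ _ him.isBdd]

lemma state_norm_le (σ : LinftyState G) {f : G → ℂ} {C : ℝ} (hf : ∀ x, ‖f x‖ ≤ C) :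
    ‖σ.toFun f‖ ≤ 2 * |C| := by
  have hCabs : ∀ x, ‖f x‖ ≤ |C| := fun x => (hf x).trans (le_abs_self C)
  have hb : IsBddFun f := ⟨C, hf⟩
  have hre : ∀ y, |(f y).re| ≤ |C| := fun y => by
    have h := hCabs y
    exact (Complex.abs_re_le_norm _).trans h
  have him : ∀ y, |(f y).im| ≤ |C| := fun y => by
    have h := hCabs y
    exact (Complex.abs_im_le_norm _).trans h
  have h1 := state_real_bound σ hre
  have h2 := state_real_bound σ him
  rw [state_decomp σ hb]
  have e1 : ‖σ.toFun (ofR fun y => (f y).re)‖ ≤ |C| := by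
    calc ‖_‖ ≤ |(σ.toFun (ofR fun y => (f y).re)).re|
        + |(σ.toFun (ofR fun y => (f y).re)).im| := Complex.norm_le_abs_re_add_abs_im _
    _ ≤ |C| := by rw [h1.1]; simpa using h1.2
  have e2 : ‖σ.toFun (ofR fun y => (f y).im)‖ ≤ |C| := by
    calc ‖_‖ ≤ |(σ.toFun (ofR fun y => (f y).im)).re|
        + |(σ.toFun (ofR fun y => (f y).im)).im| := Complex.norm_le_abs_re_add_abs_im _
    _ ≤ |C| := by rw [h2.1]; simpa using h2.2
  calc ‖_ + _‖ ≤ ‖σ.toFun (ofR fun y => (f y).re)‖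
      + ‖Complex.I * σ.toFun (ofR fun y => (f y).im)‖ := norm_add_le _ _
  _ ≤ |C| + 1 * |C| := by
      rw [norm_mul]
      exact add_le_add e1 (by simpa using e2)
  _ = 2 * |C| := by ring

section Key2

variable [Group G]

open scoped Classical in
/-- perturbation family member -/
noncomputable def pert (n : ℕ) (g : G → ℂ) : G → ℂ :=
  if IsBddFun g then pfun (1 / (n + 1)) (fun y => (g y).re) else fun _ => 1

lemma pfun_bdd (ε : ℝ) {v : G → ℝ} (hv : BddR v) : IsBddFun (pfun ε v) := by
  have h : pfun ε v = (fun _ : G => (1 : ℂ)) + (ε : ℂ) • ofR v := by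
    funext y; simp [pfun, ofR]
  rw [h]
  exact bdd_add (bdd_const 1) (bdd_smul _ hv.isBdd)

lemma pert_bdd (n : ℕ) (g : G → ℂ) : IsBddFun (pert n g) := by
  classical
  rw [pert]
  split
  · rename_i hg
    exact pfun_bdd _ (bddR_re hg)
  · exact bdd_const 1

lemma pert_spec (n : ℕ) {g : G → ℂ} (hg : IsBddFun g) :
    pert n g = pfun (1 / (n + 1)) (fun y => (g y).re) := by
  classical
  rw [pert, if_pos hg]

end Key2


section Backward

open Filter Topology

variable [Group G]

lemma backward
    (h : ∀ (n : ℕ) (f : Fin n → G → ℂ), (∀ i, IsBddFun (f i)) →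
      ∃ τ : LinftyState G, ∀ i : Fin n,
        PosDefFun (fun x => τ.toFun (fun y => f i (x * y) * (starRingEnd ℂ) (f i y)))) :
    Amenable G := by
  classical
  -- the directed index set
  let P := Finset (G → ℂ) × ℕ
  -- states from the hypothesis
  have hchoice : ∀ p : P, ∃ τ : LinftyState G, ∀ i : Fin p.1.toList.length,
      PosDefFun (fun x => τ.toFun (fun y => pert p.2 (p.1.toList.get i) (x * y) *
        (starRingEnd ℂ) (pert p.2 (p.1.toList.get i) y))) :=
    fun p => h p.1.toList.length (fun i => pert p.2 (p.1.toList.get i))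
      (fun i => pert_bdd _ _)
  choose τ hτ using hchoice
  -- ultrafilter refining atTop
  haveI : Nonempty P := ⟨(∅, 0)⟩
  let U : Ultrafilter P := Ultrafilter.of atTop
  have hU : (U : Filter P) ≤ atTop := Ultrafilter.of_le _
  -- limits exist
  have hex : ∀ f : G → ℂ, IsBddFun f → ∃ z : ℂ,
      Tendsto (fun p => (τ p).toFun f) (U : Filter P) (𝓝 z) := by
    intro f hf
    obtain ⟨C, hC⟩ := hf
    have hmem : ∀ p : P, (τ p).toFun f ∈ Metric.closedBall (0 : ℂ) (2 * |C|) := by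
      intro p
      rw [Metric.mem_closedBall, dist_zero_right]
      exact state_norm_le (τ p) hC
    have hle : (U.map fun p => (τ p).toFun f : Filter ℂ)
        ≤ 𝓟 (Metric.closedBall (0 : ℂ) (2 * |C|)) := by
      rw [Ultrafilter.coe_map, le_principal_iff, mem_map]
      exact Filter.univ_mem' hmem
    obtain ⟨z, _, hz⟩ := (isCompact_closedBall (0 : ℂ) (2 * |C|)).ultrafilter_le_nhds
      (U.map fun p => (τ p).toFun f) hle
    refine ⟨z, ?_⟩
    rwa [Ultrafilter.coe_map] at hz
  choose Lf hLf using hex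
  let T : (G → ℂ) → ℂ := fun f => if hf : IsBddFun f then Lf f hf else 0
  have hT : ∀ (f : G → ℂ) (hf : IsBddFun f),
      Tendsto (fun p => (τ p).toFun f) (U : Filter P) (𝓝 (T f)) := by
    intro f hf
    simpa only [T, dif_pos hf] using hLf f hf
  -- the limit state
  have hadd : ∀ f g : G → ℂ, IsBddFun f → IsBddFun g → T (f + g) = T f + T g := by
    intro f g hf hg
    refine tendsto_nhds_unique (hT (f + g) (bdd_add hf hg)) ?_
    exact ((hT f hf).add (hT g hg)).congr
      (fun p => ((τ p).map_add f g hf hg).symm)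
  have hsmul : ∀ (c : ℂ) (f : G → ℂ), IsBddFun f → T (c • f) = c * T f := by
    intro c f hf
    refine tendsto_nhds_unique (hT (c • f) (bdd_smul c hf)) ?_
    exact ((hT f hf).const_mul c).congr (fun p => ((τ p).map_smul c f hf).symm)
  have hposT : ∀ f : G → ℂ, IsBddFun f → (∀ x, 0 ≤ f x) → 0 ≤ T f := by
    intro f hf hp
    have hcl : IsClosed {z : ℂ | 0 ≤ z} := by
      have hset : {z : ℂ | 0 ≤ z} = Complex.re ⁻¹' Set.Ici 0 ∩ Complex.im ⁻¹' {0} := by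
        ext z
        simp only [Set.mem_setOf_eq, Complex.le_def, Set.mem_inter_iff, Set.mem_preimage,
          Set.mem_Ici, Set.mem_singleton_iff, Complex.zero_re, Complex.zero_im]
        tauto
      rw [hset]
      exact (isClosed_Ici.preimage Complex.continuous_re).inter
        (isClosed_singleton.preimage Complex.continuous_im)
    exact hcl.mem_of_tendsto (hT f hf)
      (Filter.Eventually.of_forall fun p => (τ p).pos f hf hp)
  have hunit : T (fun _ => (1 : ℂ)) = 1 := by
    refine tendsto_nhds_unique (hT _ (bdd_const 1)) ?_
    have : (fun p : P => (τ p).toFun (fun _ => (1 : ℂ))) = fun _ => (1 : ℂ) :=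
      funext fun p => (τ p).unital
    rw [this]
    exact tendsto_const_nhds
  let τinf : LinftyState G := ⟨T, hadd, hsmul, hposT, hunit⟩
  -- one-sided symmetric relation from the PD property
  have hsym : ∀ (v : G → ℝ), BddR v → ∀ s : G,
      (τinf.toFun (ofR fun y => v (s * y))).re + (τinf.toFun (ofR fun y => v (s⁻¹ * y))).re
        - 2 * (τinf.toFun (ofR v)).re ≤ 0 := by
    intro v hv s
    obtain ⟨C, hC⟩ := hv
    have hvB : BddR v := ⟨C, hC⟩
    have hgb : IsBddFun (ofR v) := hvB.isBdd
    have hb1 : IsBddFun (ofR fun y => v (s * y)) := (hvB.comp _).isBdd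
    have hb2 : IsBddFun (ofR fun y => v (s⁻¹ * y)) := (hvB.comp _).isBdd
    have key : ∀ N : ℕ,
        (τinf.toFun (ofR fun y => v (s * y))).re + (τinf.toFun (ofR fun y => v (s⁻¹ * y))).re
          - 2 * (τinf.toFun (ofR v)).re ≤ 4 * (1 / ((N : ℝ) + 1)) * C ^ 2 := by
      intro N
      have t1 : Tendsto (fun p : P => ((τ p).toFun (ofR fun y => v (s * y))).re)
          (U : Filter P) (𝓝 ((τinf.toFun (ofR fun y => v (s * y))).re)) :=
        (Complex.continuous_re.tendsto _).comp (hT _ hb1)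
      have t2 : Tendsto (fun p : P => ((τ p).toFun (ofR fun y => v (s⁻¹ * y))).re)
          (U : Filter P) (𝓝 ((τinf.toFun (ofR fun y => v (s⁻¹ * y))).re)) :=
        (Complex.continuous_re.tendsto _).comp (hT _ hb2)
      have t3 : Tendsto (fun p : P => ((τ p).toFun (ofR v)).re)
          (U : Filter P) (𝓝 ((τinf.toFun (ofR v)).re)) :=
        (Complex.continuous_re.tendsto _).comp (hT _ hgb)
      have htend := (t1.add t2).sub (t3.const_mul 2)
      refine le_of_tendsto htend ?_
      have hmemU : Set.Ici (({ofR v} : Finset (G → ℂ)), N) ∈ (U : Filter P) :=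
        hU (Filter.Ici_mem_atTop _)
      filter_upwards [hmemU] with p hp
      have hp1 : ({ofR v} : Finset (G → ℂ)) ⊆ p.1 := hp.1
      have hp2 : N ≤ p.2 := hp.2
      have hgmem : ofR v ∈ p.1 := Finset.singleton_subset_iff.mp hp1
      obtain ⟨i, hi⟩ := List.get_of_mem (Finset.mem_toList.mpr hgmem)
      have hPD := hτ p i
      rw [hi, pert_spec p.2 hgb] at hPD
      have hvg : (fun y => ((ofR v) y).re) = v := funext fun y => by simp [ofR]
      rw [hvg] at hPD
      have hε : (0 : ℝ) < 1 / ((p.2 : ℝ) + 1) := by positivity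
      have hk := keyA (τ p) v C hC (1 / ((p.2 : ℝ) + 1)) hε hPD s
      have hcast : ((N : ℝ) + 1) ≤ ((p.2 : ℝ) + 1) := by
        have : (N : ℝ) ≤ (p.2 : ℝ) := Nat.cast_le.mpr hp2
        linarith
      have h1 : (1 / ((p.2 : ℝ) + 1)) ≤ 1 / ((N : ℝ) + 1) :=
        one_div_le_one_div_of_le (by positivity) hcast
      nlinarith [sq_nonneg C]
    have hlim : Tendsto (fun N : ℕ => 4 * (1 / ((N : ℝ) + 1)) * C ^ 2) atTop (𝓝 0) := by
      have h0 : Tendsto (fun N : ℕ => 1 / ((N : ℝ) + 1)) atTop (𝓝 (0 : ℝ)) :=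
        tendsto_one_div_add_atTop_nhds_zero_nat
      have := (h0.const_mul 4).mul_const (C ^ 2)
      simpa using this
    exact ge_of_tendsto' hlim key
  -- two-sided relation
  have heq : ∀ (v : G → ℝ), BddR v → ∀ s : G,
      (τinf.toFun (ofR fun y => v (s * y))).re + (τinf.toFun (ofR fun y => v (s⁻¹ * y))).re
        = 2 * (τinf.toFun (ofR v)).re := by
    intro v hv s
    have h1 := hsym v hv s
    have h2 := hsym (-v) hv.neg s
    have e0 : τinf.toFun (ofR (-v)) = -τinf.toFun (ofR v) := by
      have h := state_ofR_smul' τinf (-1) hv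
      rw [neg_one_smul] at h
      simpa using h
    have e1 : τinf.toFun (ofR fun y => (-v) (s * y)) = -τinf.toFun (ofR fun y => v (s * y)) := by
      have h := state_ofR_smul' τinf (-1) (hv.comp fun y => s * y)
      rw [neg_one_smul] at h
      have hrw : -(fun y => v (s * y)) = fun y => (-v) (s * y) := rfl
      rw [hrw] at h
      simpa using h
    have e2 : τinf.toFun (ofR fun y => (-v) (s⁻¹ * y)) = -τinf.toFun (ofR fun y => v (s⁻¹ * y)) := by
      have h := state_ofR_smul' τinf (-1) (hv.comp fun y => s⁻¹ * y)
      rw [neg_one_smul] at h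
      have hrw : -(fun y => v (s⁻¹ * y)) = fun y => (-v) (s⁻¹ * y) := rfl
      rw [hrw] at h
      simpa using h
    rw [e0, e1, e2] at h2
    simp only [Complex.neg_re] at h2
    linarith
  -- invariance of the real part
  have hreinv : ∀ (v : G → ℝ), BddR v → ∀ s : G,
      (τinf.toFun (ofR fun y => v (s * y))).re = (τinf.toFun (ofR v)).re := by
    intro v hv s
    obtain ⟨C, hC⟩ := hv
    have hvB : BddR v := ⟨C, hC⟩
    set φ : G → ℝ := fun t => (τinf.toFun (ofR fun y => v (t * y))).re with hφ
    have hrel : ∀ t : G, φ (t * s) + φ (t * s⁻¹) = 2 * φ t := by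
      intro t
      have hr : (τinf.toFun (ofR fun y => v (t * (s * y)))).re
          + (τinf.toFun (ofR fun y => v (t * (s⁻¹ * y)))).re
          = 2 * (τinf.toFun (ofR fun y => v (t * y))).re :=
        heq (fun y => v (t * y)) (hvB.comp _) s
      have e1 : (fun y => v (t * (s * y))) = fun y => v ((t * s) * y) :=
        funext fun y => by rw [mul_assoc]
      have e2 : (fun y => v (t * (s⁻¹ * y))) = fun y => v ((t * s⁻¹) * y) :=
        funext fun y => by rw [mul_assoc]
      rw [e1, e2] at hr
      exact hr
    set a : ℕ → ℝ := fun n => φ (s ^ n) with ha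
    have hrec : ∀ n : ℕ, a (n + 2) + a n = 2 * a (n + 1) := by
      intro n
      have hr := hrel (s ^ (n + 1))
      rw [show s ^ (n + 1) * s = s ^ (n + 2) from (pow_succ s (n + 1)).symm,
        show s ^ (n + 1) * s⁻¹ = s ^ n from by rw [pow_succ, mul_inv_cancel_right]] at hr
      exact hr
    have hd : ∀ n : ℕ, a (n + 1) - a n = a 1 - a 0 := by
      intro n
      induction n with
      | zero => rfl
      | succ k ih =>
        have hk := hrec k
        linarith
    have hlin : ∀ n : ℕ, a n = a 0 + n * (a 1 - a 0) := by
      intro n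
      induction n with
      | zero => simp
      | succ k ih =>
        have hk := hd k
        push_cast
        linarith
    have hbdd : ∀ n : ℕ, |a n| ≤ |C| := by
      intro n
      exact (state_real_bound τinf (v := fun y => v (s ^ n * y)) (C := |C|)
        (fun y => (hC _).trans (le_abs_self C))).2
    have hzero : a 1 - a 0 = 0 := by
      by_contra hne
      obtain ⟨n, hn⟩ := exists_nat_gt ((2 * |C| + |a 0|) / |a 1 - a 0|)
      have habs : (0 : ℝ) < |a 1 - a 0| := abs_pos.mpr (sub_ne_zero.mpr ?_)
      swap
      · intro hcon; exact hne (by rw [hcon]; ring)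
      have h1 : (2 * |C| + |a 0|) < n * |a 1 - a 0| := by
        rw [div_lt_iff₀ habs] at hn; linarith
      have h2 : |a n| ≤ |C| := hbdd n
      rw [hlin n] at h2
      have h3 : |(n : ℝ) * (a 1 - a 0)| ≤ |a 0 + (n : ℝ) * (a 1 - a 0)| + |a 0| := by
        have := abs_add_le (a 0 + (n : ℝ) * (a 1 - a 0)) (-(a 0))
        simpa using this
      rw [abs_mul, Nat.abs_cast] at h3
      have h4 : |a 0 + (n : ℝ) * (a 1 - a 0)| ≤ |C| := h2
      nlinarith [abs_nonneg (a 0), abs_nonneg C]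
    have h10 : a 1 = a 0 := by linarith
    have h1' : φ s = φ 1 := by
      have := h10
      rw [ha] at this
      simpa [pow_one, pow_zero] using this
    have h0' : φ 1 = (τinf.toFun (ofR v)).re := by
      show (τinf.toFun (ofR fun y => v (1 * y))).re = _
      rw [show (fun y => v (1 * y)) = v from funext fun y => by rw [one_mul]]
    exact h1'.trans h0'
  -- full complex invariance for real functions
  have himzero : ∀ (v : G → ℝ), BddR v → (τinf.toFun (ofR v)).im = 0 := by
    intro v hv
    obtain ⟨C, hC⟩ := hv
    exact (state_real_bound τinf hC).1
  have hinvR : ∀ (v : G → ℝ), BddR v → ∀ s : G,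
      τinf.toFun (ofR fun y => v (s * y)) = τinf.toFun (ofR v) := by
    intro v hv s
    refine Complex.ext (hreinv v hv s) ?_
    rw [himzero _ (hv.comp _), himzero _ hv]
  -- conclude
  refine ⟨τinf, ?_⟩
  intro s f hf
  have d1 : τinf.toFun (fun x => f (s * x))
      = τinf.toFun (ofR fun y => (f (s * y)).re)
        + Complex.I * τinf.toFun (ofR fun y => (f (s * y)).im) :=
    state_decomp τinf (bdd_comp hf _)
  have d2 : τinf.toFun f
      = τinf.toFun (ofR fun y => (f y).re) + Complex.I * τinf.toFun (ofR fun y => (f y).im) :=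
    state_decomp τinf hf
  have e1 : τinf.toFun (ofR fun y => (f (s * y)).re) = τinf.toFun (ofR fun y => (f y).re) :=
    hinvR (fun y => (f y).re) (bddR_re hf) s
  have e2 : τinf.toFun (ofR fun y => (f (s * y)).im) = τinf.toFun (ofR fun y => (f y).im) :=
    hinvR (fun y => (f y).im) (bddR_im hf) s
  rw [d1, d2, e1, e2]

end Backward

end Stmt7Aux

/-- A countable discrete group `G` is amenable iff for every finite family
of bounded functions `f₁,…,fₙ : G → ℂ` there is a state `τ` on `ℓ∞(G)` such that each
function `x ↦ τ_y(fᵢ(xy) conj(fᵢ(y)))` is positive definite on `G`. -/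
theorem stmt_7 (G : Type*) [Group G] [Countable G] :
    Amenable G ↔
      ∀ (n : ℕ) (f : Fin n → G → ℂ), (∀ i, IsBddFun (f i)) →
        ∃ τ : LinftyState G, ∀ i : Fin n,
          PosDefFun (fun x => τ.toFun (fun y => f i (x * y) * (starRingEnd ℂ) (f i y))) := by
  constructor
  · rintro ⟨τ, hτ⟩ n f hf
    exact ⟨τ, fun i => Stmt7Aux.pd_of_invariant τ hτ (f i) (hf i)⟩
  · exact Stmt7Aux.backward
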